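/- For integers 1 ≤ m ≤ k and n ≥ k+1, op_{n,k}^m = Σ_{j=m+1}^{k+1} Σ_{i=1}^{n−k} c_i · op_{n−i,k}^j, where c_i is the i-th Catalan number. -/

import Mathlib

/-- The first unoccupied parking space `j` with `p ≤ j ≤ n`, if any. -/
def firstFree (n : ℕ) (occ : Finset ℕ) (p : ℕ) : Option ℕ :=
  (List.range' p (n + 1 - p)).find? (fun j => decide (j ∉ occ))

/-- Number of cars that fail to park, processing the preference list in order,
given the set of already occupied spaces. -/
def flawsFrom (n : ℕ) : List ℕ → Finset ℕ → ℕ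
  | [], _ => 0
  | p :: rest, occ =>
    match firstFree n occ p with
    | none => flawsFrom n rest occ + 1
    | some j => flawsFrom n rest (insert j occ)

/-- The number of flaws (unparked cars) of a preference list of length `n`. -/
def flaws (n : ℕ) (a : List ℕ) : ℕ := flawsFrom n a ∅

/-- A preference set of length `n`: a list of length `n` with entries in `{1, …, n}`. -/
def IsPrefSet (n : ℕ) (a : List ℕ) : Prop :=
  a.length = n ∧ ∀ x ∈ a, 1 ≤ x ∧ x ≤ n

/-- An ordered preference set of length `n`: a nondecreasing preference set. -/
def IsOrderedPrefSet (n : ℕ) (a : List ℕ) : Prop :=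
  IsPrefSet n a ∧ a.Pairwise (· ≤ ·)

/-- `op_{n,≥k}`: number of ordered preference sets of length `n` with at least `k` flaws. -/
noncomputable def opGe (n k : ℕ) : ℕ :=
  {a : List ℕ | IsOrderedPrefSet n a ∧ k ≤ flaws n a}.ncard

/-- `op_{n,≤k}`: number of ordered preference sets of length `n` with at most `k` flaws. -/
noncomputable def opLe (n k : ℕ) : ℕ :=
  {a : List ℕ | IsOrderedPrefSet n a ∧ flaws n a ≤ k}.ncard

/-- `op_{n,k}`: number of ordered preference sets of length `n` with exactly `k` flaws. -/
noncomputable def opEq (n k : ℕ) : ℕ :=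
  {a : List ℕ | IsOrderedPrefSet n a ∧ flaws n a = k}.ncard

/-- `op_{n,≥k,≤l}`: at least `k` flaws, every entry at most `l`. -/
noncomputable def opGeLe (n k l : ℕ) : ℕ :=
  {a : List ℕ | IsOrderedPrefSet n a ∧ k ≤ flaws n a ∧ ∀ x ∈ a, x ≤ l}.ncard

/-- `op_{n,≥k,≤l}^m`: at least `k` flaws, every entry at most `l`, leading term `m`. -/
noncomputable def opGeLeLead (n k l m : ℕ) : ℕ :=
  {a : List ℕ | IsOrderedPrefSet n a ∧ k ≤ flaws n a ∧ (∀ x ∈ a, x ≤ l) ∧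
    a.head? = some m}.ncard

/-- `op_{n,k,≤l}^m`: exactly `k` flaws, every entry at most `l`, leading term `m`. -/
noncomputable def opEqLeLead (n k l m : ℕ) : ℕ :=
  {a : List ℕ | IsOrderedPrefSet n a ∧ flaws n a = k ∧ (∀ x ∈ a, x ≤ l) ∧
    a.head? = some m}.ncard

/-- `op_{n,k}^m`: exactly `k` flaws, leading term `m`. -/
noncomputable def opLead (n k m : ℕ) : ℕ :=
  {a : List ℕ | IsOrderedPrefSet n a ∧ flaws n a = k ∧ a.head? = some m}.ncard

/-- `op_{n,k,=l}^m`: exactly `k` flaws, maximal entry exactly `l`, leading term `m`. -/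
noncomputable def opMaxLead (n k l m : ℕ) : ℕ :=
  {a : List ℕ | IsOrderedPrefSet n a ∧ flaws n a = k ∧ (∀ x ∈ a, x ≤ l) ∧ l ∈ a ∧
    a.head? = some m}.ncard

/-- Binomial coefficient `C(a, b)` with an integer lower index, which is `0`
when `b < 0` (the standard convention). -/
def chooseInt (a : ℕ) (b : ℤ) : ℕ := if 0 ≤ b then a.choose b.toNat else 0

/-- simplified flaw count for sorted lists: state `s` = top of the last filled block. -/
def simpF (n : ℕ) : ℕ → List ℕ → ℕ
  | _, [] => 0
  | s, p :: rest => if max p (s+1) ≤ n then simpF n (max p (s+1)) rest else simpF n s rest + 1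

lemma firstFree_eq (n : ℕ) (occ : Finset ℕ) (s : ℕ) :
    ∀ p, (∀ j, p ≤ j → (j ∈ occ ↔ j ≤ s)) →
    firstFree n occ p = if max p (s+1) ≤ n then some (max p (s+1)) else none := by
  have key : ∀ fuel p, n + 1 - p = fuel → (∀ j, p ≤ j → (j ∈ occ ↔ j ≤ s)) →
      firstFree n occ p = if max p (s+1) ≤ n then some (max p (s+1)) else none := by
    intro fuel
    induction fuel with
    | zero =>
      intro p hf _
      have hp : n < p := by omega
      unfold firstFree
      rw [hf]
      simp only [List.range'_zero, List.find?_nil]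
      rw [if_neg (by omega)]
    | succ f ih =>
      intro p hf h
      have hp : p ≤ n := by omega
      unfold firstFree
      rw [hf]
      rw [List.range'_succ]
      rw [List.find?_cons]
      by_cases hps : s < p
      · have hno : p ∉ occ := by rw [h p le_rfl]; omega
        rw [show (decide (p ∉ occ)) = true from by simp [hno]]
        simp only []
        rw [if_pos (max_le hp (by omega : s + 1 ≤ n))]
        congr 1
        rw [Nat.max_eq_left (by omega : s + 1 ≤ p)]
      · have hpo : p ∈ occ := by rw [h p le_rfl]; omega
        rw [show (decide (p ∉ occ)) = false from by simp [hpo]]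
        simp only []
        have := ih (p+1) (by omega) (fun j hj => h j (by omega))
        unfold firstFree at this
        rw [show n + 1 - (p+1) = f by omega] at this
        rw [this]
        have hmx : max (p+1) (s+1) = max p (s+1) := by
          rw [Nat.max_eq_right (by omega : p + 1 ≤ s + 1), Nat.max_eq_right (by omega : p ≤ s + 1)]
        rw [hmx]
  intro p h
  exact key (n+1-p) p rfl h

lemma flaws_eq_simpF (n : ℕ) :
    ∀ (a : List ℕ) (occ : Finset ℕ) (b s : ℕ), a.Pairwise (· ≤ ·) →
      (∀ x ∈ a, b ≤ x) → (∀ j, b ≤ j → (j ∈ occ ↔ j ≤ s)) →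
      flawsFrom n a occ = simpF n s a := by
  intro a
  induction a with
  | nil => intro _ _ _ _ _ _; rfl
  | cons p rest ih =>
    intro occ b s hsort hb hocc
    have hpb : b ≤ p := hb p (List.mem_cons_self)
    have hocc' : ∀ j, p ≤ j → (j ∈ occ ↔ j ≤ s) := fun j hj => hocc j (le_trans hpb hj)
    have hrest : ∀ x ∈ rest, p ≤ x := fun x hx => (List.rel_of_pairwise_cons hsort) hx
    have hsort' := hsort.of_cons
    rw [flawsFrom, firstFree_eq n occ s p hocc']
    by_cases hle : max p (s+1) ≤ n
    · rw [if_pos hle]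
      simp only [simpF, if_pos hle]
      apply ih _ p (max p (s+1)) hsort' hrest
      intro j hj
      simp only [Finset.mem_insert]
      constructor
      · rintro (rfl | hjo)
        · exact le_rfl
        · have := (hocc j (le_trans hpb hj)).mp hjo; omega
      · intro hjle
        rcases Nat.lt_or_ge s j with h1 | h1
        · left; omega
        · right; exact (hocc j (le_trans hpb hj)).mpr h1
    · rw [if_neg hle]
      simp only [simpF, if_neg hle]
      congr 1
      exact ih occ p s hsort' hrest hocc'

lemma flaws_eq (n : ℕ) (a : List ℕ) (hsort : a.Pairwise (· ≤ ·)) (h1 : ∀ x ∈ a, 1 ≤ x) :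
    flaws n a = simpF n 0 a :=
  flaws_eq_simpF n a ∅ 1 0 hsort h1 (by intro j hj; simp; omega)

lemma simpF_le_length (n : ℕ) : ∀ (l : List ℕ) (s : ℕ), simpF n s l ≤ l.length := by
  intro l
  induction l with
  | nil => intro s; simp [simpF]
  | cons p rest ih =>
    intro s
    simp only [simpF, List.length_cons]
    split
    · exact le_trans (ih _) (by omega)
    · have := ih s; omega

lemma simpF_all_gt (n : ℕ) : ∀ (l : List ℕ) (s : ℕ), (∀ x ∈ l, n < x) → simpF n s l = l.length := by
  intro l
  induction l with
  | nil => intro s _; rfl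
  | cons p rest ih =>
    intro s h
    have hp : n < p := h p (List.mem_cons_self)
    simp only [simpF, List.length_cons]
    rw [if_neg (by rw [Nat.max_le]; omega)]
    rw [ih s (fun x hx => h x (List.mem_cons_of_mem _ hx))]

lemma simpF_full (n : ℕ) : ∀ (l : List ℕ) (s : ℕ), n ≤ s → simpF n s l = l.length := by
  intro l
  induction l with
  | nil => intro s _; rfl
  | cons p rest ih =>
    intro s h
    simp only [simpF, List.length_cons]
    rw [if_neg (by rw [Nat.max_le]; omega)]
    rw [ih s h]

/-- state irrelevance: if both states are below all entries of `l`, result agrees. -/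
lemma simpF_state_irrel (n : ℕ) : ∀ (l : List ℕ) (s s' c : ℕ), l.Pairwise (· ≤ ·) →
    (∀ x ∈ l, c ≤ x) → s + 1 ≤ c → s' + 1 ≤ c → simpF n s l = simpF n s' l := by
  intro l
  induction l with
  | nil => intros; rfl
  | cons p rest ih =>
    intro s s' c hsort hc hs hs'
    have hp : c ≤ p := hc p (List.mem_cons_self)
    have h1 : max p (s+1) = p := by rw [Nat.max_eq_left]; omega
    have h2 : max p (s'+1) = p := by rw [Nat.max_eq_left]; omega
    simp only [simpF, h1, h2]
    split
    · rfl
    · rename_i hn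
      have hrest : ∀ x ∈ rest, n < x := by
        intro x hx
        have := (List.rel_of_pairwise_cons hsort) hx
        omega
      rw [simpF_all_gt n rest s hrest, simpF_all_gt n rest s' hrest]

/-- shift lemma -/
lemma simpF_shift (n i : ℕ) (hin : i ≤ n) : ∀ (l : List ℕ) (s : ℕ), i ≤ s →
    (∀ x ∈ l, i ≤ x) → simpF n s l = simpF (n - i) (s - i) (l.map (· - i)) := by
  intro l
  induction l with
  | nil => intros; rfl
  | cons p rest ih =>
    intro s hs hi
    have hp : i ≤ p := hi p (List.mem_cons_self)
    simp only [List.map_cons, simpF]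
    have hmx : max (p - i) (s - i + 1) = max p (s + 1) - i := by omega
    rw [hmx]
    have hcond : (max p (s+1) - i ≤ n - i) ↔ (max p (s+1) ≤ n) := by
      constructor <;> intro h <;> omega
    by_cases h : max p (s+1) ≤ n
    · rw [if_pos h, if_pos (hcond.mpr h)]
      rw [ih (max p (s+1)) (by omega) (fun x hx => hi x (List.mem_cons_of_mem _ hx))]
    · rw [if_neg h, if_neg (fun hc => h (hcond.mp hc))]
      rw [ih s hs (fun x hx => hi x (List.mem_cons_of_mem _ hx))]

/-- block lemma: a contiguous block fills `s+1, …, s+len`. -/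
lemma simpF_block (n : ℕ) : ∀ (block tail : List ℕ) (s : ℕ),
    (∀ t, t < block.length → block.getD t 0 ≤ s + t + 1) → s + block.length ≤ n →
    simpF n s (block ++ tail) = simpF n (s + block.length) tail := by
  intro block
  induction block with
  | nil => intro tail s _ _; simp
  | cons p rest ih =>
    intro tail s hb hn
    have hp : p ≤ s + 1 := by
      have := hb 0 (by simp)
      simpa [List.getD_cons_zero] using this
    simp only [List.cons_append, simpF, List.length_cons] at *
    have hmx : max p (s+1) = s + 1 := by rw [Nat.max_eq_right hp]
    rw [hmx, if_pos (by omega)]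
    rw [ih tail (s+1) (fun t ht => by
      have := hb (t+1) (by omega)
      rw [List.getD_cons_succ] at this
      omega) (by omega)]
    congr 1
    omega

/-- parked cars at most `n - s`. -/
lemma simpF_length_le (n : ℕ) : ∀ (l : List ℕ) (s : ℕ), l.length ≤ simpF n s l + (n - s) := by
  intro l
  induction l with
  | nil => intro s; simp
  | cons p rest ih =>
    intro s
    simp only [simpF, List.length_cons]
    split
    · rename_i h
      have := ih (max p (s+1))
      have h2 : s + 1 ≤ max p (s+1) := le_max_right _ _
      omega
    · have := ih s; omega

/-- all lists of length `n` with entries in `[1, N]`. -/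
def lists (n N : ℕ) : Finset (List ℕ) :=
  (Finset.univ : Finset (Fin n → Fin N)).image (fun f => List.ofFn (fun t => (f t : ℕ) + 1))

lemma mem_lists {n N : ℕ} {a : List ℕ} :
    a ∈ lists n N ↔ (a.length = n ∧ ∀ x ∈ a, 1 ≤ x ∧ x ≤ N) := by
  constructor
  · intro h
    simp only [lists, Finset.mem_image, Finset.mem_univ, true_and] at h
    obtain ⟨f, rfl⟩ := h
    refine ⟨by simp, ?_⟩
    intro x hx
    rw [List.mem_ofFn] at hx
    obtain ⟨t, rfl⟩ := hx
    exact ⟨Nat.succ_pos _, (f t).isLt⟩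
  · rintro ⟨hlen, hmem⟩
    simp only [lists, Finset.mem_image, Finset.mem_univ, true_and]
    refine ⟨fun t => ⟨a.get (Fin.cast hlen.symm t) - 1, ?_⟩, ?_⟩
    · have hm : a.get (Fin.cast hlen.symm t) ∈ a := a.get_mem _
      have := hmem _ hm
      omega
    · apply List.ext_getElem (by simp [hlen])
      intro t h1 h2
      simp only [List.getElem_ofFn]
      have hm : a[t] ∈ a := List.getElem_mem _
      have := hmem _ hm
      simp only [List.get_eq_getElem, Fin.coe_cast]
      omega

/-- generic decomposition counting lemma -/
lemma card_decomp {α ι β : Type*} [DecidableEq α] (S : Finset α) (T : Finset ι)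
    (U : ι → Finset β) (f : ι → β → α)
    (hmem : ∀ i ∈ T, ∀ b ∈ U i, f i b ∈ S)
    (hsurj : ∀ a ∈ S, ∃ i ∈ T, ∃ b ∈ U i, f i b = a)
    (hinj : ∀ i ∈ T, ∀ j ∈ T, ∀ b ∈ U i, ∀ c ∈ U j, f i b = f j c → i = j ∧ b = c) :
    S.card = ∑ i ∈ T, (U i).card := by
  classical
  have hS : S = T.biUnion (fun i => (U i).image (f i)) := by
    ext a
    simp only [Finset.mem_biUnion, Finset.mem_image]
    constructor
    · intro ha
      obtain ⟨i, hi, b, hb, hfb⟩ := hsurj a ha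
      exact ⟨i, hi, b, hb, hfb⟩
    · rintro ⟨i, hi, b, hb, rfl⟩
      exact hmem i hi b hb
  rw [hS, Finset.card_biUnion]
  · apply Finset.sum_congr rfl
    intro i hi
    apply Finset.card_image_of_injOn
    intro b hb c hc hbc
    exact (hinj i hi i hi b hb c hc hbc).2
  · intro i hi j hj hij
    simp only [Finset.disjoint_left, Finset.mem_image]
    rintro a ⟨b, hb, rfl⟩ ⟨c, hc, hfc⟩
    exact hij (hinj i hi j hj b hb c hc hfc.symm).1

/-- Finset version of the `opLead` set. -/
def FA (n k m : ℕ) : Finset (List ℕ) :=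
  (lists n n).filter (fun a => a.Pairwise (· ≤ ·) ∧ simpF n 0 a = k ∧ a.head? = some m)

lemma opLead_eq_card (n k m : ℕ) : opLead n k m = (FA n k m).card := by
  rw [opLead, ← Set.ncard_coe_finset]
  congr 1
  ext a
  simp only [Finset.coe_filter, Set.mem_setOf_eq, FA, IsOrderedPrefSet, IsPrefSet, mem_lists]
  constructor
  · rintro ⟨⟨⟨hlen, hent⟩, hsort⟩, hfl, hhead⟩
    refine ⟨⟨hlen, hent⟩, hsort, ?_, hhead⟩
    rw [← flaws_eq n a hsort (fun x hx => (hent x hx).1), hfl]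
  · rintro ⟨⟨hlen, hent⟩, hsort, hfl, hhead⟩
    refine ⟨⟨⟨hlen, hent⟩, hsort⟩, ?_, hhead⟩
    rw [flaws_eq n a hsort (fun x hx => (hent x hx).1), hfl]

def Bal (u : List ℕ) : Prop := ∀ t, ∀ (h : t < u.length), u.get ⟨t, h⟩ ≤ t + 1

instance : DecidablePred Bal := fun _ => Nat.decidableBallLT _ _

/-- the Catalan-counted blocks -/
def FC (i : ℕ) : Finset (List ℕ) :=
  (lists i i).filter (fun u => u.Pairwise (· ≤ ·) ∧ Bal u)

lemma mem_FC {i : ℕ} {u : List ℕ} :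
    u ∈ FC i ↔ u.length = i ∧ (∀ x ∈ u, 1 ≤ x) ∧ u.Pairwise (· ≤ ·) ∧
      (∀ t (h : t < u.length), u[t] ≤ t + 1) := by
  simp only [FC, Finset.mem_filter, mem_lists]
  simp only [Bal, List.get_eq_getElem]
  constructor
  · rintro ⟨⟨hlen, hent⟩, hsort, hbal⟩
    exact ⟨hlen, fun x hx => (hent x hx).1, hsort, hbal⟩
  · rintro ⟨hlen, hent, hsort, hbal⟩
    refine ⟨⟨hlen, fun x hx => ⟨hent x hx, ?_⟩⟩, hsort, hbal⟩
    obtain ⟨t, ht, rfl⟩ := List.getElem_of_mem hx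
    have := hbal t ht
    omega

lemma sorted_getElem_mono {u : List ℕ} (h : u.Pairwise (· ≤ ·)) {s t : ℕ}
    (hst : s ≤ t) (ht : t < u.length) : u[s]'(by omega) ≤ u[t] := by
  rcases Nat.eq_or_lt_of_le hst with rfl | hlt
  · exact le_refl _
  · exact List.pairwise_iff_getElem.mp h s t (by omega) ht hlt

lemma FC_zero : FC 0 = {[]} := by
  ext u
  simp only [mem_FC, Finset.mem_singleton, List.length_eq_zero_iff]
  constructor
  · rintro ⟨h, _⟩; exact h
  · rintro rfl; refine ⟨rfl, by simp, by simp, by simp⟩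

lemma card_FC_succ (i : ℕ) :
    (FC (i+1)).card = ∑ t ∈ Finset.range (i+1), (FC t).card * (FC (i-t)).card := by
  classical
  have hmain := card_decomp (FC (i+1)) (Finset.range (i+1))
    (fun t => FC t ×ˢ FC (i - t))
    (fun t de => 1 :: (de.1 ++ (de.2.map (· + (t+1)))))
    ?_ ?_ ?_
  · rw [hmain]
    exact Finset.sum_congr rfl (fun t _ => Finset.card_product _ _)
  · -- hmem
    rintro t ht ⟨d, e⟩ hde
    rw [Finset.mem_range] at ht
    simp only [Finset.mem_product] at hde
    obtain ⟨hd, he⟩ := hde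
    rw [mem_FC] at hd he
    obtain ⟨hdl, hd1, hds, hdb⟩ := hd
    obtain ⟨hel, he1, hes, heb⟩ := he
    rw [mem_FC]
    dsimp only
    simp only [List.length_cons, List.length_append, List.length_map]
    refine ⟨by omega, ?_, ?_, ?_⟩
    · intro x hx
      simp only [List.mem_cons, List.mem_append, List.mem_map] at hx
      rcases hx with rfl | hx | ⟨y, _, rfl⟩
      · omega
      · exact hd1 x hx
      · omega
    · rw [List.pairwise_cons]
      constructor
      · intro x hx
        simp only [List.mem_append, List.mem_map] at hx
        rcases hx with hx | ⟨y, hy, rfl⟩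
        · exact hd1 x hx
        · omega
      · rw [List.pairwise_append]
        refine ⟨hds, List.Pairwise.map _ (fun hab => by omega) hes, ?_⟩
        intro x hx y hy
        simp only [List.mem_map] at hy
        obtain ⟨z, hz, rfl⟩ := hy
        obtain ⟨s, hs, rfl⟩ := List.getElem_of_mem hx
        have := hdb s hs
        omega
    · intro s hs
      match s with
      | 0 => exact Nat.le.refl
      | Nat.succ r =>
        rw [List.getElem_cons_succ]
        by_cases hr : r < d.length
        · rw [List.getElem_append_left hr]
          have := hdb r hr
          omega
        · have hr2 : d.length ≤ r := by omega
          rw [List.getElem_append_right hr2]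
          rw [List.getElem_map]
          have hlt : r - d.length < e.length := by omega
          have := heb (r - d.length) hlt
          omega
  · -- hsurj
    intro u hu
    rw [mem_FC] at hu
    obtain ⟨hlen, h1, hsort, hbal⟩ := hu
    have hlen1 : 0 < u.length := by omega
    have hu0 : u[0] = 1 := by
      have := hbal 0 hlen1
      have := h1 _ (List.getElem_mem hlen1)
      omega
    have hex : ∃ t, t = i ∨ (∃ h : t + 1 < u.length, u[t+1] = t + 2) := ⟨i, Or.inl rfl⟩
    set t₀ := Nat.find hex with ht₀def
    have hP := Nat.find_spec hex
    rw [← ht₀def] at hP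
    have ht₀i : t₀ ≤ i := by
      by_contra hc
      exact Nat.find_min hex (show i < t₀ from by omega) (Or.inl rfl)
    have hub : t₀ + 1 ≤ u.length := by omega
    have hPt : t₀ < i → ∀ (h : t₀ + 1 < u.length), u[t₀+1] = t₀ + 2 := by
      intro hlt h
      rcases hP with h' | ⟨hh, hv⟩
      · omega
      · exact hv
    have hminP : ∀ s, s < t₀ → (∀ (h : s + 1 < u.length), u[s+1] ≠ s + 2) := by
      intro s hs h
      have hmin := Nat.find_min hex hs
      simp only [not_or, not_exists] at hmin
      exact hmin.2 h
    refine ⟨t₀, Finset.mem_range.mpr (by omega),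
      ⟨(u.drop 1).take t₀, (u.drop (t₀+1)).map (· - (t₀+1))⟩, ?_, ?_⟩
    · simp only [Finset.mem_product]
      have hsubd : ((u.drop 1).take t₀).Sublist u :=
        List.Sublist.trans (List.take_sublist _ _) (List.drop_sublist _ _)
      have hdlen : ((u.drop 1).take t₀).length = t₀ := by
        rw [List.length_take, List.length_drop]
        omega
      constructor
      · rw [mem_FC]
        refine ⟨hdlen, fun x hx => h1 x (hsubd.mem hx), hsort.sublist hsubd, ?_⟩
        intro s hs
        rw [hdlen] at hs
        have hs1 : s + 1 < u.length := by omega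
        have hget : ((u.drop 1).take t₀)[s]'(by omega) = u[s+1] := by
          rw [List.getElem_take, List.getElem_drop]
          congr 1
          omega
        rw [hget]
        have hb := hbal (s+1) hs1
        have := hminP s hs hs1
        omega
      · rw [mem_FC]
        have helen : ((u.drop (t₀+1)).map (· - (t₀+1))).length = i - t₀ := by
          rw [List.length_map, List.length_drop]
          omega
        refine ⟨helen, ?_, ?_, ?_⟩
        · intro x hx
          simp only [List.mem_map] at hx
          obtain ⟨y, hy, rfl⟩ := hx
          obtain ⟨s, hs, hys⟩ := List.getElem_of_mem hy
          have hsu : t₀ + 1 + s < u.length := by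
            rw [List.length_drop] at hs; omega
          have hyv : y = u[t₀+1+s]'hsu := by rw [← hys, List.getElem_drop]
          have hlt : t₀ < i := by
            rcases Nat.eq_or_lt_of_le ht₀i with heq | hlt
            · exfalso; rw [List.length_drop] at hs; omega
            · exact hlt
          have hv := hPt hlt (by omega)
          have hmono : u[t₀+1]'(by omega) ≤ u[t₀+1+s]'hsu :=
            sorted_getElem_mono hsort (by omega) hsu
          omega
        · exact List.Pairwise.map _ (fun hab => by omega)
            (hsort.sublist (List.drop_sublist _ _))
        · intro s hs
          rw [helen] at hs
          have hs2 : t₀ + 1 + s < u.length := by omega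
          have hget : ((u.drop (t₀+1)).map (· - (t₀+1)))[s]'(by omega) = u[t₀+1+s] - (t₀+1) := by
            rw [List.getElem_map, List.getElem_drop]
          rw [hget]
          have := hbal (t₀+1+s) hs2
          omega
    · -- glue back equals u
      dsimp only
      have hE : ((u.drop (t₀+1)).map (· - (t₀+1))).map (· + (t₀+1)) = u.drop (t₀+1) := by
        rw [List.map_map]
        apply List.ext_getElem (by simp)
        intro r h1 h2
        simp only [List.getElem_map, Function.comp]
        have h3 : t₀ + 1 + r < u.length := by
          rw [List.length_drop] at h2; omega
        have h4 : (u.drop (t₀+1))[r]'h2 = u[t₀+1+r]'h3 := List.getElem_drop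
        have hlt : t₀ < i := by
          rw [List.length_drop] at h2; omega
        have hv := hPt hlt (by omega)
        have hmono : u[t₀+1]'(by omega) ≤ u[t₀+1+r]'h3 :=
          sorted_getElem_mono hsort (by omega) h3
        omega
      rw [hE]
      have hdd : List.drop t₀ (u.drop 1) = u.drop (t₀+1) := by
        rw [List.drop_drop]
        congr 1
        omega
      rw [← hdd, List.take_append_drop]
      have hcons : u = 1 :: u.drop 1 := by
        apply List.ext_getElem (by simp; omega)
        intro r h1 h2
        match r with
        | 0 => simpa using hu0
        | Nat.succ q =>
          rw [List.getElem_cons_succ]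
          have h3 : q < (u.drop 1).length := by simp at h2 ⊢; omega
          have h4 := List.getElem_drop (xs := u) (i := 1) (j := q) (h := h3)
          rw [h4]
          congr 1
          omega
      exact hcons.symm
  · -- hinj
    rintro t ht t' ht' ⟨d, e⟩ hde ⟨d', e'⟩ hde' heq
    rw [Finset.mem_range] at ht ht'
    simp only [Finset.mem_product] at hde hde'
    obtain ⟨hd, he⟩ := hde
    obtain ⟨hd', he'⟩ := hde'
    rw [mem_FC] at hd he hd' he'
    obtain ⟨hdl, hd1, hds, hdb⟩ := hd
    obtain ⟨hel, he1, hes, heb⟩ := he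
    obtain ⟨hdl', hd1', hds', hdb'⟩ := hd'
    obtain ⟨hel', he1', hes', heb'⟩ := he'
    simp only [List.cons.injEq, true_and] at heq
    have key : ∀ (dd ee : List ℕ) (tt : ℕ), dd.length = tt → 0 < ee.length →
        (∀ x ∈ ee, 1 ≤ x) →
        ∃ v, (dd ++ ee.map (· + (tt+1)))[tt]? = some v ∧ tt + 2 ≤ v := by
      intro dd ee tt hh1 hh2 hh3
      rw [List.getElem?_append_right (by omega), List.getElem?_map]
      rw [List.getElem?_eq_getElem (by omega : tt - dd.length < ee.length)]
      refine ⟨ee[tt - dd.length] + (tt+1), rfl, ?_⟩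
      have := hh3 _ (List.getElem_mem (by omega : tt - dd.length < ee.length))
      omega
    have keyL : ∀ (dd ee : List ℕ) (tt s : ℕ), dd.length = tt → s < tt →
        (∀ r (h : r < dd.length), dd[r] ≤ r + 1) →
        ∃ v, (dd ++ ee.map (· + (tt+1)))[s]? = some v ∧ v ≤ s + 1 := by
      intro dd ee tt s hh1 hh2 hh3
      rw [List.getElem?_append, if_pos (by omega)]
      rw [List.getElem?_eq_getElem (by omega : s < dd.length)]
      exact ⟨dd[s]'(by omega), rfl, hh3 s (by omega)⟩
    have httt : t = t' := by
      by_contra hne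
      rcases Nat.lt_or_ge t t' with hlt | hge
      · obtain ⟨v, hv, hv2⟩ := key d e t hdl (by omega) he1
        obtain ⟨w, hw, hw2⟩ := keyL d' e' t' t hdl' hlt hdb'
        rw [heq, hw] at hv
        simp only [Option.some.injEq] at hv
        omega
      · have hlt : t' < t := by omega
        obtain ⟨v, hv, hv2⟩ := key d' e' t' hdl' (by omega) he1'
        obtain ⟨w, hw, hw2⟩ := keyL d e t t' hdl hlt hdb
        rw [← heq, hw] at hv
        simp only [Option.some.injEq] at hv
        omega
    subst httt
    have hdd : d = d' ∧ e.map (· + (t+1)) = e'.map (· + (t+1)) :=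
      List.append_inj heq (by omega)
    have hee : e = e' :=
      List.map_injective_iff.mpr (fun a b h => by omega) hdd.2
    exact ⟨rfl, by rw [hdd.1, hee]⟩

lemma card_FC (i : ℕ) : (FC i).card = catalan i := by
  induction i using Nat.strong_induction_on with
  | _ i ih =>
    match i with
    | 0 => rw [FC_zero]; simp [catalan_zero]
    | Nat.succ j =>
      rw [card_FC_succ, catalan_succ, ← Fin.sum_univ_eq_sum_range]
      exact Finset.sum_congr rfl (fun t _ => by rw [ih t (by omega), ih (j - t) (by omega)])

lemma map_add_sub (l : List ℕ) (c : ℕ) : (l.map (· + c)).map (· - c) = l := by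
  induction l with
  | nil => rfl
  | cons x r ih => simp only [List.map_cons, ih]; congr 1; omega

lemma map_sub_add (l : List ℕ) (c : ℕ) (h : ∀ x ∈ l, c ≤ x) : (l.map (· - c)).map (· + c) = l := by
  induction l with
  | nil => rfl
  | cons x r ih =>
    simp only [List.map_cons]
    rw [ih (fun x hx => h x (List.mem_cons_of_mem _ hx))]
    congr 1
    have := h x (List.mem_cons_self)
    omega

lemma sorted_map_add {l : List ℕ} (c : ℕ) (h : l.Pairwise (· ≤ ·)) :
    (l.map (· + c)).Pairwise (· ≤ ·) :=
  List.Pairwise.map _ (fun hab => by omega) h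

lemma sorted_map_sub {l : List ℕ} (c : ℕ) (h : l.Pairwise (· ≤ ·)) :
    (l.map (· - c)).Pairwise (· ≤ ·) :=
  List.Pairwise.map _ (fun hab => by omega) h

lemma sorted_head_le {a : List ℕ} (hs : a.Pairwise (· ≤ ·)) {m : ℕ} (hh : a[0]? = some m) :
    ∀ x ∈ a, m ≤ x := by
  intro x hx
  obtain ⟨t, ht, rfl⟩ := List.getElem_of_mem hx
  obtain ⟨h0, hv⟩ := List.getElem?_eq_some_iff.mp hh
  rw [← hv]
  exact sorted_getElem_mono hs (Nat.zero_le t) ht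

lemma mem_FA {n k m : ℕ} {a : List ℕ} :
    a ∈ FA n k m ↔ a.length = n ∧ (∀ x ∈ a, 1 ≤ x ∧ x ≤ n) ∧ a.Pairwise (· ≤ ·) ∧
      simpF n 0 a = k ∧ a.head? = some m := by
  simp only [FA, Finset.mem_filter, mem_lists]
  tauto

/-- the central computation: processing a contiguous block from `m`, then a tail
entirely above the block. -/
lemma key_chain (n m i : ℕ) (hm : 1 ≤ m) (hmn : m + i - 1 ≤ n) (hi : 1 ≤ i)
    (block tail : List ℕ) (hbl : block.length = i)
    (hb0 : ∀ t (h : t < block.length), block[t] ≤ m + t)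
    (hbh : block[0]? = some m)
    (htail : ∀ x ∈ tail, m + i + 1 ≤ x) (htsort : tail.Pairwise (· ≤ ·)) :
    simpF n 0 (block ++ tail) = simpF (n - i) 0 (tail.map (· - i)) := by
  obtain ⟨hbpos, hb0v⟩ := List.getElem?_eq_some_iff.mp hbh
  obtain ⟨p, block', rfl⟩ : ∃ p bl, block = p :: bl := by
    cases block with
    | nil => simp at hbpos
    | cons p bl => exact ⟨p, bl, rfl⟩
  have hp : p = m := by simpa using hb0v
  subst p
  have h1 : simpF n 0 ((m :: block') ++ tail) = simpF n m (block' ++ tail) := by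
    simp only [List.cons_append, simpF, List.append_eq]
    rw [Nat.max_eq_left (by omega : 0 + 1 ≤ m), if_pos (by omega : m ≤ n)]
  rw [h1]
  rw [simpF_block n block' tail m (fun t ht => by
      rw [List.getD_eq_getElem _ _ ht]
      have := hb0 (t+1) (by simpa using Nat.succ_lt_succ ht)
      simp only [List.getElem_cons_succ] at this
      omega)
    (by simp only [List.length_cons] at hbl; omega)]
  have hbl' : block'.length = i - 1 := by simp only [List.length_cons] at hbl; omega
  rw [hbl']
  rw [simpF_shift n i (by omega) tail (m + (i-1)) (by omega) (fun x hx => by have := htail x hx; omega)]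
  have hs : m + (i - 1) - i = m - 1 := by omega
  rw [hs]
  apply simpF_state_irrel (n - i) _ _ _ (m+1)
  · exact sorted_map_sub i htsort
  · intro x hx
    simp only [List.mem_map] at hx
    obtain ⟨y, hy, rfl⟩ := hx
    have := htail y hy
    omega
  · omega
  · omega

/-- if the preferences never jump (below the critical index), the result is `m - 1` flaws. -/
lemma fill_all (n m : ℕ) (a : List ℕ) (hm : 1 ≤ m) (hmn : m ≤ n) (hlen : a.length = n)
    (hh : a[0]? = some m)
    (hnojump : ∀ t (h : t < a.length), t < n - m + 1 → a[t] ≤ m + t) :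
    simpF n 0 a = m - 1 := by
  obtain ⟨hpos, h0v⟩ := List.getElem?_eq_some_iff.mp hh
  obtain ⟨p, a', rfl⟩ : ∃ p a', a = p :: a' := by
    cases a with
    | nil => simp at hpos
    | cons p a' => exact ⟨p, a', rfl⟩
  have hp : p = m := by simpa using h0v
  subst p
  have hlen' : a'.length = n - 1 := by simp only [List.length_cons] at hlen; omega
  have h1 : simpF n 0 (m :: a') = simpF n m a' := by
    simp only [simpF]
    rw [Nat.max_eq_left (by omega : 0 + 1 ≤ m), if_pos (by omega : m ≤ n)]
  rw [h1]
  have hsplit : a' = a'.take (n - m) ++ a'.drop (n - m) := (List.take_append_drop _ _).symm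
  rw [hsplit]
  rw [simpF_block n (a'.take (n-m)) (a'.drop (n-m)) m
    (fun t ht => by
      rw [List.getD_eq_getElem _ _ ht]
      rw [List.length_take] at ht
      have htl : t < a'.length := by omega
      have hget : (a'.take (n-m))[t]'(by rw [List.length_take]; omega) = a'[t]'htl :=
        List.getElem_take
      rw [hget]
      have := hnojump (t+1) (by simp only [List.length_cons]; omega) (by omega)
      simp only [List.getElem_cons_succ] at this
      omega)
    (by rw [List.length_take]; omega)]
  rw [simpF_full n _ _ (by rw [List.length_take]; omega)]
  rw [List.length_drop]
  omega

lemma main_card (n k m : ℕ) (hm : 1 ≤ m) (hmk : m ≤ k) (hn : k + 1 ≤ n) :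
    (FA n k m).card = ∑ ji ∈ Finset.Icc (m+1) (k+1) ×ˢ Finset.Icc 1 (n-k),
      catalan ji.2 * (FA (n - ji.2) k ji.1).card := by
  classical
  have hmain := card_decomp (FA n k m) (Finset.Icc (m+1) (k+1) ×ˢ Finset.Icc 1 (n-k))
    (fun ji => FC ji.2 ×ˢ FA (n - ji.2) k ji.1)
    (fun ji ub => (ub.1.map (· + (m-1))) ++ (ub.2.map (· + ji.2)))
    ?_ ?_ ?_
  · rw [hmain]
    exact Finset.sum_congr rfl (fun ji _ => by rw [Finset.card_product, card_FC])
  · -- hmem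
    rintro ⟨j, i⟩ hji ⟨u, b⟩ hub
    simp only [Finset.mem_product, Finset.mem_Icc] at hji
    obtain ⟨⟨hj1, hj2⟩, hi1, hi2⟩ := hji
    simp only [Finset.mem_product] at hub
    obtain ⟨hu, hb⟩ := hub
    rw [mem_FC] at hu
    obtain ⟨hul, hu1, hus, hub2⟩ := hu
    rw [mem_FA] at hb
    obtain ⟨hbl, hb1, hbs, hbf, hbh⟩ := hb
    dsimp only
    have hin : i ≤ n - k := hi2
    have hin' : i < n := by omega
    have hmin1 : m + i - 1 ≤ n - 1 := by omega
    -- u is nonempty with head 1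
    have hupos : 0 < u.length := by omega
    have hu0 : u[0] = 1 := by
      have h1 := hub2 0 hupos
      have h2 := hu1 _ (List.getElem_mem hupos)
      omega
    -- entries of b are ≥ j
    have hbge : ∀ x ∈ b, j ≤ x := by
      apply sorted_head_le hbs
      rw [← List.head?_eq_getElem?]
      exact hbh
    have hbpos : 0 < b.length := by
      rcases b with _ | ⟨x, b'⟩
      · simp at hbh
      · simp
    rw [mem_FA]
    have hlentot : ((u.map (· + (m-1))) ++ (b.map (· + i))).length = n := by
      simp only [List.length_append, List.length_map, hul, hbl]
      omega
    refine ⟨hlentot, ?_, ?_, ?_, ?_⟩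
    · intro x hx
      simp only [List.mem_append, List.mem_map] at hx
      rcases hx with ⟨y, hy, rfl⟩ | ⟨y, hy, rfl⟩
      · constructor
        · have := hu1 y hy; omega
        · obtain ⟨t, ht, rfl⟩ := List.getElem_of_mem hy
          have := hub2 t ht
          omega
      · constructor
        · have := (hb1 y hy).1; omega
        · have := (hb1 y hy).2; omega
    · rw [List.pairwise_append]
      refine ⟨sorted_map_add _ hus, sorted_map_add _ hbs, ?_⟩
      intro x hx y hy
      simp only [List.mem_map] at hx hy
      obtain ⟨z, hz, rfl⟩ := hx
      obtain ⟨w, hw, rfl⟩ := hy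
      obtain ⟨t, ht, rfl⟩ := List.getElem_of_mem hz
      have h1 := hub2 t ht
      have h2 := hbge w hw
      omega
    · -- flaw count
      rw [key_chain n m i hm (by omega) (by omega) _ _ (by simp [hul])
        (fun t ht => by
          simp only [List.length_map] at ht
          rw [List.getElem_map]
          have := hub2 t ht
          omega)
        (by
          rw [List.getElem?_eq_some_iff]
          refine ⟨by simp only [List.length_map]; omega, ?_⟩
          rw [List.getElem_map, hu0]
          omega)
        (fun x hx => by
          simp only [List.mem_map] at hx
          obtain ⟨y, hy, rfl⟩ := hx
          have := hbge y hy
          omega)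
        (sorted_map_add _ hbs)]
      rw [map_add_sub]
      exact hbf
    · rw [List.head?_eq_getElem?, List.getElem?_append, if_pos (by simp only [List.length_map]; omega)]
      rw [List.getElem?_map, List.getElem?_eq_getElem hupos]
      simp only [Option.map_some, hu0]
      congr 1
      omega
  · -- hsurj
    intro a ha
    rw [mem_FA] at ha
    obtain ⟨hlen, hent, hsort, hflaw, hhead⟩ := ha
    rw [List.head?_eq_getElem?] at hhead
    obtain ⟨hpos, h0v⟩ := List.getElem?_eq_some_iff.mp hhead
    have hmn : m ≤ n := by omega
    have hage : ∀ x ∈ a, m ≤ x := sorted_head_le hsort hhead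
    -- existence of a jump
    have hex : ∃ t, ∃ h : t < a.length, m + t < a[t] := by
      by_contra hc
      push_neg at hc
      have := fill_all n m a hm hmn hlen hhead (fun t ht _ => hc t ht)
      omega
    set t₀ := Nat.find hex with ht₀def
    obtain ⟨hfound, hfv⟩ := Nat.find_spec hex
    have ht₀len : t₀ < a.length := hfound
    have ht₀v : m + t₀ < a[t₀]'ht₀len := hfv
    have hminP : ∀ s, s < t₀ → ∀ (h : s < a.length), a[s] ≤ m + s := by
      intro s hs h
      have hmin := Nat.find_min hex hs
      push_neg at hmin
      exact hmin h
    have ht₀1 : 1 ≤ t₀ := by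
      rcases Nat.eq_zero_or_pos t₀ with h0 | h0
      · exfalso
        obtain ⟨v, hv1, hv2⟩ : ∃ v, a[t₀]? = some v ∧ m + t₀ < v :=
          ⟨a[t₀]'ht₀len, List.getElem?_eq_getElem _, ht₀v⟩
        rw [h0] at hv1
        rw [hhead] at hv1
        simp only [Option.some.injEq] at hv1
        omega
      · exact h0
    -- the block fits: m + t₀ - 1 ≤ n
    have hfit : m + t₀ - 1 ≤ n := by
      by_contra hc
      have hbig : n - m + 1 < t₀ := by omega
      have := fill_all n m a hm hmn hlen hhead
        (fun t ht htn => hminP t (by omega) ht)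
      omega
    have ht₀n : t₀ < n := by rw [hlen] at ht₀len; exact ht₀len
    -- tail entries are all ≥ m + t₀ + 1
    have htailge : ∀ x ∈ a.drop t₀, m + t₀ + 1 ≤ x := by
      intro x hx
      obtain ⟨s, hs, hxs⟩ := List.getElem_of_mem hx
      have hsu : t₀ + s < a.length := by rw [List.length_drop] at hs; omega
      have hxv : x = a[t₀+s]'hsu := by rw [← hxs, List.getElem_drop]
      have hmono : a[t₀]'ht₀len ≤ a[t₀+s]'hsu := sorted_getElem_mono hsort (by omega) hsu
      omega
    -- flaw transfer
    have htransfer : simpF n 0 a = simpF (n - t₀) 0 ((a.drop t₀).map (· - t₀)) := by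
      conv_lhs => rw [← List.take_append_drop t₀ a]
      apply key_chain n m t₀ hm hfit ht₀1
      · rw [List.length_take]; omega
      · intro t ht
        rw [List.length_take] at ht
        have htl : t < a.length := by omega
        have hget : (a.take t₀)[t]'(by rw [List.length_take]; omega) = a[t]'htl :=
          List.getElem_take
        rw [hget]
        exact hminP t (by omega) htl
      · rw [List.getElem?_eq_some_iff]
        refine ⟨by rw [List.length_take]; omega, ?_⟩
        rw [List.getElem_take]
        exact h0v
      · exact htailge
      · exact hsort.sublist (List.drop_sublist _ _)
    have hbflaw : simpF (n - t₀) 0 ((a.drop t₀).map (· - t₀)) = k := by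
      rw [← htransfer]; exact hflaw
    -- bounds on i = t₀
    have hblen : ((a.drop t₀).map (· - t₀)).length = n - t₀ := by
      rw [List.length_map, List.length_drop, hlen]
    have hkle : k ≤ n - t₀ := by
      have hl := simpF_le_length (n - t₀) ((a.drop t₀).map (· - t₀)) 0
      rw [hbflaw, hblen] at hl
      exact hl
    set j := a[t₀]'ht₀len - t₀ with hjdef
    have hjm : m + 1 ≤ j := by omega
    -- entries of b are ≥ j
    have hbge : ∀ x ∈ (a.drop t₀).map (· - t₀), j ≤ x := by
      intro x hx
      simp only [List.mem_map] at hx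
      obtain ⟨y, hy, rfl⟩ := hx
      have := htailge y hy
      obtain ⟨s, hs, hys⟩ := List.getElem_of_mem hy
      have hsu : t₀ + s < a.length := by rw [List.length_drop] at hs; omega
      have hyv : y = a[t₀+s]'hsu := by rw [← hys, List.getElem_drop]
      have hmono : a[t₀]'ht₀len ≤ a[t₀+s]'hsu := sorted_getElem_mono hsort (by omega) hsu
      omega
    have hble : ∀ x ∈ (a.drop t₀).map (· - t₀), x ≤ n - t₀ := by
      intro x hx
      simp only [List.mem_map] at hx
      obtain ⟨y, hy, rfl⟩ := hx
      have := (hent y ((List.drop_sublist _ _).mem hy)).2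
      omega
    have hbsort : ((a.drop t₀).map (· - t₀)).Pairwise (· ≤ ·) :=
      sorted_map_sub _ (hsort.sublist (List.drop_sublist _ _))
    have hjk : j ≤ k + 1 := by
      have hjn : j ≤ n - t₀ := by
        have := (hent _ (List.getElem_mem ht₀len)).2
        omega
      have hirr : simpF (n-t₀) (j-1) ((a.drop t₀).map (· - t₀))
          = simpF (n-t₀) 0 ((a.drop t₀).map (· - t₀)) :=
        simpF_state_irrel _ _ _ _ j hbsort hbge (by omega) (by omega)
      have hll := simpF_length_le (n-t₀) ((a.drop t₀).map (· - t₀)) (j-1)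
      rw [hblen, hirr, hbflaw] at hll
      omega
    refine ⟨(j, t₀), ?_, ⟨(a.take t₀).map (· - (m-1)), (a.drop t₀).map (· - t₀)⟩, ?_, ?_⟩
    · simp only [Finset.mem_product, Finset.mem_Icc]
      exact ⟨⟨hjm, hjk⟩, ht₀1, by omega⟩
    · simp only [Finset.mem_product]
      constructor
      · rw [mem_FC]
        have hul : ((a.take t₀).map (· - (m-1))).length = t₀ := by
          rw [List.length_map, List.length_take]
          omega
        refine ⟨hul, ?_, sorted_map_sub _ (hsort.sublist (List.take_sublist _ _)), ?_⟩
        · intro x hx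
          simp only [List.mem_map] at hx
          obtain ⟨y, hy, rfl⟩ := hx
          have := hage y ((List.take_sublist _ _).mem hy)
          omega
        · intro t ht
          rw [List.length_map, List.length_take] at ht
          have htl : t < a.length := by omega
          have hget : ((a.take t₀).map (· - (m-1)))[t]'(by
              rw [List.length_map, List.length_take]; omega)
              = a[t]'htl - (m-1) := by
            rw [List.getElem_map, List.getElem_take]
          rw [hget]
          have := hminP t (by omega) htl
          omega
      · rw [mem_FA]
        refine ⟨hblen, ?_, hbsort, hbflaw, ?_⟩
        · intro x hx
          exact ⟨by have := hbge x hx; omega, hble x hx⟩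
        · rw [List.head?_eq_getElem?, List.getElem?_map]
          have hdpos : 0 < (a.drop t₀).length := by rw [List.length_drop]; omega
          rw [List.getElem?_eq_getElem hdpos]
          simp only [Option.map_some]
          have hgd : (a.drop t₀)[0]'hdpos = a[t₀]'ht₀len := by
            rw [List.getElem_drop]
            congr 1
          rw [hgd, hjdef]
    · -- glue back
      dsimp only
      rw [map_sub_add _ _ (fun x hx => by
        have := hage x ((List.take_sublist _ _).mem hx); omega)]
      rw [map_sub_add _ _ (fun x hx => by have := htailge x hx; omega)]
      exact List.take_append_drop _ _
  · -- hinj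
    rintro ⟨j, i⟩ hji ⟨j', i'⟩ hji' ⟨u, b⟩ hub ⟨u', b'⟩ hub' heq
    simp only [Finset.mem_product, Finset.mem_Icc] at hji hji'
    obtain ⟨⟨hj1, hj2⟩, hi1, hi2⟩ := hji
    obtain ⟨⟨hj1', hj2'⟩, hi1', hi2'⟩ := hji'
    simp only [Finset.mem_product] at hub hub'
    obtain ⟨hu, hb⟩ := hub
    obtain ⟨hu', hb'⟩ := hub'
    rw [mem_FC] at hu hu'
    rw [mem_FA] at hb hb'
    obtain ⟨hul, hu1, hus, hubal⟩ := hu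
    obtain ⟨hul', hu1', hus', hubal'⟩ := hu'
    obtain ⟨hbl, hb1, hbs, hbf, hbh⟩ := hb
    obtain ⟨hbl', hb1', hbs', hbf', hbh'⟩ := hb'
    dsimp only at heq
    have keyL : ∀ (uu bb : List ℕ) (ii s : ℕ), uu.length = ii → s < ii →
        (∀ t (h : t < uu.length), uu[t] ≤ t + 1) →
        ∃ v, ((uu.map (· + (m-1))) ++ (bb.map (· + ii)))[s]? = some v ∧ v ≤ m + s := by
      intro uu bb ii s h1 h2 h3
      rw [List.getElem?_append, if_pos (by rw [List.length_map]; omega)]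
      rw [List.getElem?_map, List.getElem?_eq_getElem (by omega : s < uu.length)]
      simp only [Option.map_some]
      refine ⟨uu[s]'(by omega) + (m-1), rfl, ?_⟩
      have := h3 s (by omega)
      omega
    have keyR : ∀ (uu bb : List ℕ) (jj ii : ℕ), uu.length = ii →
        bb.head? = some jj →
        ∃ v, ((uu.map (· + (m-1))) ++ (bb.map (· + ii)))[ii]? = some v ∧ v = jj + ii := by
      intro uu bb jj ii h1 h2
      rw [List.head?_eq_getElem?] at h2
      obtain ⟨hbp, hbv⟩ := List.getElem?_eq_some_iff.mp h2
      rw [List.getElem?_append_right (by rw [List.length_map]; omega)]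
      rw [List.length_map, h1, Nat.sub_self]
      rw [List.getElem?_map, List.getElem?_eq_getElem hbp]
      simp only [Option.map_some]
      exact ⟨bb[0]'hbp + ii, rfl, by rw [hbv]⟩
    have hii : i = i' := by
      by_contra hne
      rcases Nat.lt_or_ge i i' with hlt | hge
      · obtain ⟨v, hv, hv2⟩ := keyR u b j i hul hbh
        obtain ⟨w, hw, hw2⟩ := keyL u' b' i' i hul' hlt hubal'
        rw [heq, hw] at hv
        simp only [Option.some.injEq] at hv
        omega
      · have hlt : i' < i := by omega
        obtain ⟨v, hv, hv2⟩ := keyR u' b' j' i' hul' hbh'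
        obtain ⟨w, hw, hw2⟩ := keyL u b i i' hul hlt hubal
        rw [← heq, hw] at hv
        simp only [Option.some.injEq] at hv
        omega
    subst hii
    have hparts : u.map (· + (m-1)) = u'.map (· + (m-1)) ∧ b.map (· + i) = b'.map (· + i) :=
      List.append_inj heq (by rw [List.length_map, List.length_map, hul, hul'])
    have huu : u = u' := List.map_injective_iff.mpr (fun x y h => by omega) hparts.1
    have hbb : b = b' := List.map_injective_iff.mpr (fun x y h => by omega) hparts.2
    have hjj : j = j' := by
      rw [hbb] at hbh
      rw [hbh] at hbh'
      simpa using hbh'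
    exact ⟨by rw [hjj], by rw [huu, hbb]⟩

theorem stmt16 (n k m : ℕ) (hm : 1 ≤ m) (hmk : m ≤ k) (hn : k + 1 ≤ n) :
    opLead n k m
      = ∑ j ∈ Finset.Icc (m + 1) (k + 1), ∑ i ∈ Finset.Icc 1 (n - k),
          catalan i * opLead (n - i) k j := by
  rw [opLead_eq_card, main_card n k m hm hmk hn, Finset.sum_product]
  apply Finset.sum_congr rfl
  intro j _
  apply Finset.sum_congr rfl
  intro i _
  rw [opLead_eq_card]
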